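/- For 0 < t ≤ 1 and 0 ≤ v, r ≤ 1, we have ((1-v) + v t^(-1))^(-1) ≤ t^v ≤ g_{r,v}(t), where g_{r,v}(t) = v(t-1)(r((1+t)/2)^(v-1) + (1-r)) + 1. -/

import Mathlib

open Real

/-- Bernoulli for exponents in [-1,0]. -/
lemma bern_neg {u q : ℝ} (hu : 0 < 1 + u) (hq0 : -1 ≤ q) (hq1 : q ≤ 0) :
    1 + q * u ≤ (1 + u) ^ q := by
  set p : ℝ := -q with hp
  have hp0 : 0 ≤ p := by linarith
  have hp1 : p ≤ 1 := by linarith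
  have hb : (1 + u) ^ p ≤ 1 + p * u :=
    rpow_one_add_le_one_add_mul_self (by linarith) hp0 hp1
  have hApos : 0 < (1 + u) ^ p := rpow_pos_of_pos hu p
  have hq : (1 + u) ^ q = ((1 + u) ^ p)⁻¹ := by
    rw [hp, rpow_neg hu.le, inv_inv]
  rw [hq]
  have hpu : 0 < 1 + p * u := by
    rcases le_or_gt 0 u with h | h
    · nlinarith
    · nlinarith
  have hinv : (1 + p * u)⁻¹ ≤ ((1 + u) ^ p)⁻¹ := inv_anti₀ hApos hb
  have h2 : 1 - p * u ≤ (1 + p * u)⁻¹ := by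
    rw [← one_div, le_div_iff₀ hpu]
    nlinarith [sq_nonneg (p * u)]
  have h3 : q * u = -(p * u) := by rw [hp]; ring
  linarith

/-- Tangent line inequality for x ↦ x^q, q ∈ [-1,0]. -/
lemma tangent_rpow {x m q : ℝ} (hx : 0 < x) (hm : 0 < m) (hq0 : -1 ≤ q) (hq1 : q ≤ 0) :
    m ^ q + q * m ^ (q - 1) * (x - m) ≤ x ^ q := by
  have hu : 0 < 1 + (x / m - 1) := by
    have : 0 < x / m := div_pos hx hm
    linarith
  have hb := bern_neg hu hq0 hq1
  have hxm : 1 + (x / m - 1) = x / m := by ring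
  rw [hxm, div_rpow hx.le hm.le] at hb
  have hmq : 0 < m ^ q := rpow_pos_of_pos hm q
  have hmul := mul_le_mul_of_nonneg_right hb hmq.le
  rw [div_mul_cancel₀ _ (rpow_pos_of_pos hm q).ne'] at hmul
  have hrw : m ^ (q - 1) = m ^ q / m := by
    rw [rpow_sub hm, rpow_one]
  rw [hrw]
  have : (1 + q * (x / m - 1)) * m ^ q = m ^ q + q * (m ^ q / m) * (x - m) := by
    field_simp
  linarith [this ▸ hmul]

lemma mid_bound {t v : ℝ} (ht0 : 0 < t) (ht1 : t ≤ 1) (hv0 : 0 < v) (hv1 : v ≤ 1) :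
    t ^ v ≤ 1 + v * (t - 1) * ((1 + t) / 2) ^ (v - 1) := by
  set F : ℝ → ℝ := fun x => 1 + v * ((x - 1) * ((1 + x) / 2) ^ (v - 1)) - x ^ v with hF
  have hpos : ∀ x ∈ Set.Icc t 1, (0:ℝ) < x := fun x hx => lt_of_lt_of_le ht0 hx.1
  have hmpos : ∀ x ∈ Set.Icc t 1, (0:ℝ) < (1 + x) / 2 := fun x hx => by
    have := hpos x hx; linarith
  -- derivative data on the interior
  have hder : ∀ x ∈ Set.Ioo t 1, HasDerivAt F
      (v * (1 * ((1 + x) / 2) ^ (v - 1) +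
        (x - 1) * ((v - 1) * ((1 + x) / 2) ^ (v - 1 - 1) * (2⁻¹))) - v * x ^ (v - 1)) x := by
    intro x hx
    have hx0 : (0:ℝ) < x := ht0.trans hx.1
    have hm0 : (0:ℝ) < (1 + x) / 2 := by linarith
    have h1 : HasDerivAt (fun y : ℝ => (1 + y) / 2) (2⁻¹) x := by
      simpa using ((hasDerivAt_id x).const_add 1).div_const 2
    have h2 : HasDerivAt (fun y : ℝ => ((1 + y) / 2) ^ (v - 1))
        ((v - 1) * ((1 + x) / 2) ^ (v - 1 - 1) * 2⁻¹) x := by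
      exact (Real.hasDerivAt_rpow_const (p := v - 1) (Or.inl hm0.ne')).comp x h1
    have h3 : HasDerivAt (fun y : ℝ => y - 1) 1 x := (hasDerivAt_id x).sub_const 1
    have h4 : HasDerivAt (fun y : ℝ => y ^ v) (v * x ^ (v - 1)) x :=
      Real.hasDerivAt_rpow_const (Or.inl hx0.ne')
    have h5 := ((h3.mul h2).const_mul v).const_add 1
    simpa [hF, mul_comm, mul_assoc, mul_left_comm, Pi.sub_def] using h5.sub h4
  -- the derivative is nonpositive
  have hder_np : ∀ x ∈ Set.Ioo t 1,
      v * (1 * ((1 + x) / 2) ^ (v - 1) +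
        (x - 1) * ((v - 1) * ((1 + x) / 2) ^ (v - 1 - 1) * (2⁻¹))) - v * x ^ (v - 1) ≤ 0 := by
    intro x hx
    have hx0 : (0:ℝ) < x := ht0.trans hx.1
    have hm0 : (0:ℝ) < (1 + x) / 2 := by linarith
    have key := tangent_rpow (x := x) (m := (1 + x) / 2) (q := v - 1) hx0 hm0
      (by linarith) (by linarith)
    have key2 := mul_le_mul_of_nonneg_left key hv0.le
    nlinarith [key2]
  -- antitone on Icc t 1
  have hcont : ContinuousOn F (Set.Icc t 1) := by
    apply ContinuousOn.sub
    · apply ContinuousOn.add continuousOn_const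
      apply ContinuousOn.mul continuousOn_const
      apply ContinuousOn.mul (by fun_prop)
      apply ContinuousOn.rpow_const (by fun_prop)
      intro x hx
      exact Or.inl (hmpos x hx).ne'
    · apply ContinuousOn.rpow_const continuousOn_id
      intro x hx
      exact Or.inl (hpos x hx).ne'
  have hanti : AntitoneOn F (Set.Icc t 1) := by
    apply antitoneOn_of_hasDerivWithinAt_nonpos (convex_Icc t 1) hcont
    · intro x hx
      rw [interior_Icc] at hx
      exact ((hder x hx).hasDerivWithinAt)
    · intro x hx
      rw [interior_Icc] at hx
      exact hder_np x hx
  have hmem_t : t ∈ Set.Icc t 1 := ⟨le_refl t, ht1⟩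
  have hmem_1 : (1:ℝ) ∈ Set.Icc t 1 := ⟨ht1, le_refl 1⟩
  have hF1 : F 1 = 0 := by simp [hF]
  have := hanti hmem_t hmem_1 ht1
  rw [hF1] at this
  simp only [hF] at this
  nlinarith [this]

theorem harmonic_le_pow_le_grv (t r v : ℝ) (ht0 : 0 < t) (ht1 : t ≤ 1)
    (hv0 : 0 ≤ v) (hv1 : v ≤ 1) (hr0 : 0 ≤ r) (hr1 : r ≤ 1) :
    ((1 - v) + v * t⁻¹)⁻¹ ≤ t ^ v ∧
    t ^ v ≤ v * (t - 1) * (r * ((1 + t) / 2) ^ (v - 1) + (1 - r)) + 1 := by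
  constructor
  · -- harmonic mean ≤ geometric
    have hti : (0:ℝ) ≤ t⁻¹ := by positivity
    have hg := Real.geom_mean_le_arith_mean2_weighted (w₁ := 1 - v) (w₂ := v)
      (p₁ := 1) (p₂ := t⁻¹) (by linarith) hv0 zero_le_one hti (by ring)
    rw [Real.one_rpow, one_mul, mul_one] at hg
    rw [Real.inv_rpow ht0.le] at hg
    have hpos : (0:ℝ) < (t ^ v)⁻¹ := by positivity
    have := inv_anti₀ hpos hg
    rwa [inv_inv] at this
  · rcases eq_or_lt_of_le hv0 with hv | hv
    · subst hv
      simp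
    · have hA := mid_bound ht0 ht1 hv hv1
      have hB : t ^ v ≤ 1 + v * (t - 1) := by
        have h := rpow_one_add_le_one_add_mul_self (s := t - 1) (by linarith) hv0 hv1
        have ht : (1:ℝ) + (t - 1) = t := by ring
        rwa [ht] at h
      nlinarith [mul_le_mul_of_nonneg_left hA hr0,
        mul_le_mul_of_nonneg_left hB (by linarith : (0:ℝ) ≤ 1 - r)]
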